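/- Let n ≥ 1 and m = n − 1. The map φ : Matrix (Fin n) (Fin m) ℝ → Sym(n,ℝ)/ℝ·I, φ(X) = X Xᵀ + ℝ·I, is surjective, and its fibres coincide exactly with the orbits of the right action of O(m) given by X ↦ X C⁻¹: that is, φ(X) = φ(Y) if and only if Y = X C for some C ∈ O(m). -/

import Mathlib

set_option maxHeartbeats 1000000


open Matrix

/-- The real vector space of real symmetric (self-adjoint) `n × n` matrices,
as a submodule of the matrix space. -/
abbrev SymSub (n : ℕ) : Submodule ℝ (Matrix (Fin n) (Fin n) ℝ) :=
  selfAdjoint.submodule ℝ (Matrix (Fin n) (Fin n) ℝ)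

lemma one_mem_symSub (n : ℕ) : (1 : Matrix (Fin n) (Fin n) ℝ) ∈ SymSub n :=
  IsSelfAdjoint.one _

lemma mulT_mem_symSub {n m : ℕ} (X : Matrix (Fin n) (Fin m) ℝ) : X * Xᵀ ∈ SymSub n := by
  have := Matrix.isHermitian_mul_conjTranspose_self X
  rw [Matrix.conjTranspose_eq_transpose_of_trivial] at this
  exact this

lemma conj_mem_symSub {n : ℕ} (C : Matrix (Fin n) (Fin n) ℝ) (A : SymSub n) :
    C * (A : Matrix (Fin n) (Fin n) ℝ) * Cᵀ ∈ SymSub n := by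
  have := Matrix.isHermitian_mul_mul_conjTranspose C (A.2 : (A : Matrix (Fin n) (Fin n) ℝ).IsHermitian)
  rw [Matrix.conjTranspose_eq_transpose_of_trivial] at this
  exact this

/-- The line `ℝ·I` inside the space of symmetric matrices. -/
noncomputable def lineI (n : ℕ) : Submodule ℝ (SymSub n) :=
  Submodule.span ℝ {(⟨1, one_mem_symSub n⟩ : SymSub n)}

/-- The map `φ : X ↦ X Xᵀ + ℝ·I` on `n × (n-1)` real matrices. -/
noncomputable def phi (n : ℕ) (X : Matrix (Fin n) (Fin (n - 1)) ℝ) :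
    SymSub n ⧸ lineI n :=
  Submodule.Quotient.mk ⟨X * Xᵀ, mulT_mem_symSub X⟩


lemma inner_toEuc {n m : ℕ} (X : Matrix (Fin n) (Fin m) ℝ) (c d : EuclideanSpace ℝ (Fin n)) :
    (inner ℝ (Matrix.toEuclideanLin Xᵀ c) (Matrix.toEuclideanLin Xᵀ d))
      = (WithLp.equiv 2 _ c) ⬝ᵥ ((X * Xᵀ) *ᵥ (WithLp.equiv 2 _ d)) := by
  have h0 : (inner ℝ (Matrix.toEuclideanLin Xᵀ c) (Matrix.toEuclideanLin Xᵀ d))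
      = (Xᵀ *ᵥ (WithLp.equiv 2 _ c)) ⬝ᵥ (Xᵀ *ᵥ (WithLp.equiv 2 _ d)) := by
    simp only [PiLp.inner_apply, RCLike.inner_apply, starRingEnd_apply, star_trivial]
    rw [dotProduct_comm]; rfl
  rw [h0, ← mulVec_mulVec, dotProduct_mulVec, mulVec_transpose, vecMul_vecMul, mulVec_mulVec, ← dotProduct_mulVec]

lemma exists_orth {n m : ℕ} (X Y : Matrix (Fin n) (Fin m) ℝ)
    (h : X * Xᵀ = Y * Yᵀ) : ∃ C : Matrix (Fin m) (Fin m) ℝ, C * Cᵀ = 1 ∧ Y = X * C := by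
  set f := Matrix.toEuclideanLin Xᵀ with hf
  set g := Matrix.toEuclideanLin Yᵀ with hg
  have key : ∀ c d, (inner ℝ (f c) (f d)) = inner ℝ (g c) (g d) := by
    intro c d; rw [hf, hg, inner_toEuc, inner_toEuc, h]
  have hker : ∀ c, f c = 0 → g c = 0 := by
    intro c hc
    have := key c c
    rw [hc, inner_zero_left] at this
    exact inner_self_eq_zero.mp this.symm
  obtain ⟨σ, hσ⟩ := f.rangeRestrict.exists_rightInverse_of_surjective f.range_rangeRestrict
  have hfσ : ∀ s : LinearMap.range f, f (σ s) = s := by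
    intro s
    have := congrArg (fun u => (u s : EuclideanSpace ℝ (Fin m))) hσ
    simpa using this
  have hnorm : ∀ s : LinearMap.range f, ‖(g.comp σ) s‖ = ‖s‖ := by
    intro s
    have h1 : (inner ℝ (g (σ s)) (g (σ s))) = inner ℝ (f (σ s)) (f (σ s)) := (key _ _).symm
    rw [hfσ] at h1
    rw [real_inner_self_eq_norm_sq, real_inner_self_eq_norm_sq] at h1
    have := congrArg Real.sqrt h1
    rwa [Real.sqrt_sq (norm_nonneg _), Real.sqrt_sq (norm_nonneg _)] at this
  set L : LinearMap.range f →ₗᵢ[ℝ] EuclideanSpace ℝ (Fin m) := ⟨g.comp σ, hnorm⟩ with hL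
  set E := L.extend
  have hE : ∀ c, E (f c) = g c := by
    intro c
    have h1 : E (f c) = L ⟨f c, LinearMap.mem_range_self f c⟩ := L.extend_apply ⟨f c, LinearMap.mem_range_self f c⟩
    rw [h1, hL]
    show g (σ ⟨f c, _⟩) = g c
    have h2 : f (σ ⟨f c, LinearMap.mem_range_self f c⟩ - c) = 0 := by
      rw [map_sub, hfσ, sub_self]
    have := hker _ h2
    rw [map_sub, sub_eq_zero] at this
    exact this
  set M := Matrix.toEuclideanLin.symm E.toLinearMap with hM
  have hEM : Matrix.toEuclideanLin M = E.toLinearMap := Matrix.toEuclideanLin.apply_symm_apply _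
  have hYX : Yᵀ = M * Xᵀ := by
    apply Matrix.toEuclideanLin.injective
    apply LinearMap.ext; intro c
    have : Matrix.toEuclideanLin (M * Xᵀ) c = Matrix.toEuclideanLin M (f c) := by
      simp [toEuclideanLin_apply, ← mulVec_mulVec, hf]
    rw [this, hEM]
    exact (hE c).symm
  refine ⟨Mᵀ, ?_, ?_⟩
  · -- Mᵀ * Mᵀᵀ = Mᵀ * M = 1
    rw [transpose_transpose]
    ext j k
    have hcol : ∀ j : Fin m, Matrix.toEuclideanLin M ((WithLp.equiv 2 _).symm (Pi.single j 1))
        = (WithLp.equiv 2 (Fin m → ℝ)).symm (fun i => M i j) := by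
      intro j; rw [toEuclideanLin_apply]
      simp [mulVec_single]; rfl
    have := E.inner_map_map ((WithLp.equiv 2 (Fin m → ℝ)).symm (Pi.single j 1))
      ((WithLp.equiv 2 (Fin m → ℝ)).symm (Pi.single k 1))
    have hcolE : ∀ j : Fin m, E ((WithLp.equiv 2 (Fin m → ℝ)).symm (Pi.single j 1))
        = (WithLp.equiv 2 (Fin m → ℝ)).symm (fun i => M i j) := by
      intro j
      have h2 := hcol j
      rw [hEM] at h2
      exact h2
    rw [hcolE, hcolE] at this
    simp only [PiLp.inner_apply, RCLike.inner_apply, starRingEnd_apply, star_trivial,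
      WithLp.equiv_symm_apply, PiLp.toLp_apply] at this
    have hlhs : (Mᵀ * M) j k = ∑ i, M i j * M i k := by
      simp [Matrix.mul_apply, transpose_apply]
    rw [hlhs]
    rw [show ∑ i, M i j * M i k = ∑ i, M i k * M i j from Finset.sum_congr rfl fun i _ => mul_comm _ _, this]
    by_cases hjk : j = k
    · simp [hjk, Pi.single_apply, Matrix.one_apply]
    · simp [hjk, Pi.single_apply, Matrix.one_apply, Ne.symm hjk]
  · have := congrArg Matrix.transpose hYX
    rw [transpose_mul, transpose_transpose] at this
    exact this


lemma t_nonpos {n m : ℕ} (hmn : m < n) (X Y : Matrix (Fin n) (Fin m) ℝ) (t : ℝ)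
    (h : X * Xᵀ = Y * Yᵀ + t • 1) : t ≤ 0 := by
  -- find v ≠ 0 with Xᵀ *ᵥ v = 0
  have hni : ¬ Function.Injective (Matrix.mulVecLin Xᵀ) := by
    intro hinj
    have := LinearMap.finrank_le_finrank_of_injective hinj
    simp only [Module.finrank_fintype_fun_eq_card, Fintype.card_fin] at this
    omega
  rw [← LinearMap.ker_eq_bot] at hni
  obtain ⟨v, hvmem, hv0⟩ := Submodule.ne_bot_iff _ |>.mp hni
  · have hv : Xᵀ *ᵥ v = 0 := hvmem
    have e1 : ∀ (Z : Matrix (Fin n) (Fin m) ℝ), v ⬝ᵥ ((Z * Zᵀ) *ᵥ v) = (Zᵀ *ᵥ v) ⬝ᵥ (Zᵀ *ᵥ v) := by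
      intro Z
      rw [← mulVec_mulVec, dotProduct_mulVec, mulVec_transpose]
    have e2 : v ⬝ᵥ ((X * Xᵀ) *ᵥ v) = 0 := by rw [e1, hv]; simp
    have e3 : v ⬝ᵥ ((Y * Yᵀ + t • 1) *ᵥ v) = (Yᵀ *ᵥ v) ⬝ᵥ (Yᵀ *ᵥ v) + t * (v ⬝ᵥ v) := by
      rw [add_mulVec, dotProduct_add, e1, smul_mulVec, one_mulVec, dotProduct_smul,
        smul_eq_mul]
    have e4 : (Yᵀ *ᵥ v) ⬝ᵥ (Yᵀ *ᵥ v) + t * (v ⬝ᵥ v) = 0 := by rw [← e3, ← h, e2]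
    have hw : 0 ≤ (Yᵀ *ᵥ v) ⬝ᵥ (Yᵀ *ᵥ v) :=
      Finset.sum_nonneg fun i _ => mul_self_nonneg _
    have hvv : 0 < v ⬝ᵥ v := by
      rcases lt_or_eq_of_le (Finset.sum_nonneg fun i (_ : i ∈ Finset.univ) =>
        mul_self_nonneg (v i)) with h' | h'
      · exact h'
      · exact absurd (dotProduct_self_eq_zero.mp h'.symm) hv0
    nlinarith


lemma exists_rep {m : ℕ} (A : Matrix (Fin (m+1)) (Fin (m+1)) ℝ) (hA : A.IsHermitian) :
    ∃ (X : Matrix (Fin (m+1)) (Fin m) ℝ) (t : ℝ), X * Xᵀ = A + t • 1 := by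
  set ev := hA.eigenvalues with hev
  obtain ⟨i₀, -, hi₀⟩ := Finset.exists_mem_eq_inf' (Finset.univ_nonempty (α := Fin (m+1))) ev
  set μ := Finset.univ.inf' Finset.univ_nonempty ev with hμ
  have hle : ∀ i, μ ≤ ev i := fun i => Finset.inf'_le ev (Finset.mem_univ i)
  set g : Fin (m+1) → ℝ := fun i => Real.sqrt (ev i - μ) with hg
  set F : Matrix (Fin (m+1)) (Fin m) ℝ :=
    Matrix.of (fun i k => if i = i₀.succAbove k then g i else 0) with hF
  have hFF : F * Fᵀ = Matrix.diagonal (fun i => ev i - μ) := by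
    ext i j
    rw [Matrix.mul_apply]
    by_cases hi : i = i₀
    · subst hi
      have hz : ∀ k, F i k = 0 := fun k => if_neg (fun hk => (Fin.succAbove_ne i k) hk.symm)
      rw [Matrix.diagonal_apply]
      rcases eq_or_ne i j with rfl | hij
      · simp [hz, ← hi₀]
      · simp [hz, hij]
    · obtain ⟨k₀, hk₀⟩ := Fin.exists_succAbove_eq hi
      rw [Finset.sum_eq_single k₀]
      · have hFik : F i k₀ = g i := by rw [hF]; simp [hk₀.symm]
        have hFjk : Fᵀ k₀ j = if j = i then g j else 0 := by
          rw [Matrix.transpose_apply, hF]; simp [hk₀]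
        rw [hFik, hFjk, Matrix.diagonal_apply]
        rcases eq_or_ne i j with rfl | hij
        · rw [if_pos rfl, if_pos rfl, hg, Real.mul_self_sqrt (sub_nonneg.mpr (hle i))]
        · rw [if_neg (Ne.symm hij), if_neg hij, mul_zero]
      · intro k _ hk
        have : F i k = 0 := by
          rw [hF]; apply if_neg
          intro hik
          exact hk (Fin.succAbove_right_injective (hik.symm.trans hk₀.symm))
        rw [this, zero_mul]
      · intro hk; exact absurd (Finset.mem_univ k₀) hk
  set U : Matrix (Fin (m+1)) (Fin (m+1)) ℝ := (hA.eigenvectorUnitary : Matrix (Fin (m+1)) (Fin (m+1)) ℝ) with hU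
  refine ⟨U * F, -μ, ?_⟩
  have hspec := hA.spectral_theorem
  have hUs : star U = Uᵀ := by
    rw [Matrix.star_eq_conjTranspose, Matrix.conjTranspose_eq_transpose_of_trivial]
  have hUU : U * Uᵀ = 1 := by
    rw [← hUs]; exact (Matrix.mem_unitaryGroup_iff).mp hA.eigenvectorUnitary.2
  have hdiag : Matrix.diagonal (fun i => ev i - μ) = Matrix.diagonal ev - μ • 1 := by
    rw [smul_one_eq_diagonal, Matrix.diagonal_sub]
  calc U * F * (U * F)ᵀ = U * (F * Fᵀ) * Uᵀ := by
        rw [Matrix.transpose_mul]; rw [Matrix.mul_assoc, Matrix.mul_assoc, Matrix.mul_assoc]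
    _ = U * (Matrix.diagonal ev) * Uᵀ - μ • (U * Uᵀ) := by
        rw [hFF, hdiag, Matrix.mul_sub, Matrix.sub_mul, Matrix.mul_smul, Matrix.smul_mul,
          Matrix.mul_one]
    _ = A + (-μ) • 1 := by
        rw [hUU]
        have : A = U * Matrix.diagonal ev * Uᵀ := by
          rw [← hUs]
          convert hspec using 2
          simp [Unitary.conjStarAlgAut_apply, hU, hev, RCLike.ofReal_real_eq_id]
        rw [← this, neg_smul, sub_eq_add_neg]


/-- For `m = n - 1`, the map `φ(X) = X Xᵀ + ℝ·I` is surjective and its fibres coincide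
with the orbits of the right action `X ↦ X C⁻¹` of `O(m)`. -/
theorem stmt14 (n : ℕ) (hn : 1 ≤ n) :
    Function.Surjective (phi n) ∧
    ∀ X Y : Matrix (Fin n) (Fin (n - 1)) ℝ,
      phi n X = phi n Y ↔
        ∃ C : Matrix (Fin (n - 1)) (Fin (n - 1)) ℝ, C * Cᵀ = 1 ∧ Y = X * C := by
  obtain ⟨m, rfl⟩ : ∃ m, n = m + 1 := ⟨n - 1, (Nat.succ_pred_eq_of_pos hn).symm⟩
  constructor
  · intro q
    obtain ⟨B, rfl⟩ := Submodule.Quotient.mk_surjective (lineI (m+1)) q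
    obtain ⟨X, t, hX⟩ := exists_rep (B : Matrix (Fin (m+1)) (Fin (m+1)) ℝ) B.2
    refine ⟨X, ?_⟩
    rw [phi, Submodule.Quotient.eq]
    simp only [lineI, Submodule.mem_span_singleton]
    refine ⟨t, Subtype.ext ?_⟩
    show t • (1 : Matrix (Fin (m+1)) (Fin (m+1)) ℝ)
      = X * Xᵀ - (B : Matrix (Fin (m+1)) (Fin (m+1)) ℝ)
    rw [hX]; abel
  · intro X Y
    constructor
    · intro h
      rw [phi, phi, Submodule.Quotient.eq] at h
      simp only [lineI, Submodule.mem_span_singleton] at h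
      obtain ⟨t, ht⟩ := h
      have ht' : t • (1 : Matrix (Fin (m+1)) (Fin (m+1)) ℝ) = X * Xᵀ - Y * Yᵀ := by
        have := congrArg Subtype.val ht
        simpa using this
      have h1 : X * Xᵀ = Y * Yᵀ + t • 1 := by rw [ht']; abel
      have h2 : Y * Yᵀ = X * Xᵀ + (-t) • 1 := by
        rw [h1, add_assoc, ← add_smul]; simp
      have hmn : m < m + 1 := Nat.lt_succ_self m
      have hta := t_nonpos hmn X Y t h1
      have htb := t_nonpos hmn Y X (-t) h2
      have ht0 : t = 0 := le_antisymm hta (by linarith)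
      exact exists_orth X Y (by rw [h1, ht0, zero_smul, add_zero])
    · rintro ⟨C, hC, rfl⟩
      have hXC : (X * C) * (X * C)ᵀ = X * Xᵀ := by
        rw [Matrix.transpose_mul, ← Matrix.mul_assoc, Matrix.mul_assoc X C Cᵀ, hC,
          Matrix.mul_one]
      rw [phi, phi]
      congr 1
      exact Subtype.ext hXC.symm
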